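/- Let V be a real normed vector space, let v_1, ..., v_T be vectors in V with ‖v_1‖ ≤ ε and let α_1, ..., α_T be nonnegative reals with Σ_j α_j = 1. Set β = 1 − α_1 = Σ_{j>1} α_j and suppose μ > 0, c ∈ (0,1], δ > 0 are such that ‖Σ_{j>1} α_j v_j‖ ≥ β·c·μ (the non-cancellation hypothesis on the renormalized average of the non-sink values). If ‖Σ_{j=1}^T α_j v_j‖ < δ, then α_1 ≥ 1 − (δ + ε)/(μ·c). -/
import Mathlib


/-- Sink Necessity Lemma: at Kalman gain K = 1, a residual attention update can keep
`h' = h + ∑ j α j • v j` close to `h` only by concentrating almost all attention mass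
on a small-norm value vector (an attention sink). -/
theorem sink_necessity {V : Type*} [NormedAddCommGroup V] [NormedSpace ℝ V]
    {T : ℕ} (hT : 0 < T) (v : Fin T → V) (α : Fin T → ℝ) (ε μ c δ : ℝ)
    (hα : ∀ j, 0 ≤ α j) (hsum : ∑ j, α j = 1)
    (hv1 : ‖v ⟨0, hT⟩‖ ≤ ε)
    (hμ : 0 < μ) (hc : 0 < c) (hc1 : c ≤ 1) (hδ : 0 < δ)
    (hnc : (1 - α ⟨0, hT⟩) * c * μ ≤ ‖∑ j ∈ Finset.univ.erase ⟨0, hT⟩, α j • v j‖)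
    (hsmall : ‖∑ j, α j • v j‖ < δ) :
    α ⟨0, hT⟩ ≥ 1 - (δ + ε) / (μ * c) := by
  set i0 : Fin T := ⟨0, hT⟩
  have hsplit : ∑ j, α j • v j = α i0 • v i0 + ∑ j ∈ Finset.univ.erase i0, α j • v j := by
    rw [← Finset.add_sum_erase _ _ (Finset.mem_univ i0)]
  have hα1 : α i0 ≤ 1 := by
    rw [← hsum]
    exact Finset.single_le_sum (fun j _ => hα j) (Finset.mem_univ i0)
  have hrest : ‖∑ j ∈ Finset.univ.erase i0, α j • v j‖ < δ + ε := by
    have : ∑ j ∈ Finset.univ.erase i0, α j • v j = (∑ j, α j • v j) - α i0 • v i0 := by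
      rw [hsplit]; abel
    rw [this]
    calc ‖(∑ j, α j • v j) - α i0 • v i0‖ ≤ ‖∑ j, α j • v j‖ + ‖α i0 • v i0‖ :=
          norm_sub_le _ _
      _ < δ + ε := by
          have h1 : ‖α i0 • v i0‖ ≤ ε := by
            rw [norm_smul, Real.norm_of_nonneg (hα i0)]
            calc α i0 * ‖v i0‖ ≤ 1 * ε := by
                  apply mul_le_mul hα1 hv1 (norm_nonneg _) zero_le_one
              _ = ε := one_mul ε
          linarith
  have key : (1 - α i0) * c * μ < δ + ε := lt_of_le_of_lt hnc hrest
  have hcμ : 0 < μ * c := mul_pos hμ hc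
  rw [ge_iff_le, sub_le_iff_le_add, ← sub_le_iff_le_add']
  rw [le_div_iff₀ hcμ]
  nlinarith [key]
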